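/- Let K be a field of characteristic different from 2 and let A be an antisymmetric n × n matrix over K (i.e. Aᵀ = −A) of rank r. Then r is even and there exists an invertible n × n matrix P over K such that Pᵀ A P = R^r_n. -/

import Mathlib

open Matrix

/-- `Rmat K r n` is the `n × n` matrix `R^r_n` (0-indexed): block diagonal with `r/2`
diagonal blocks equal to `[[0,1],[-1,0]]` followed by zeros. -/
def Rmat (K : Type*) [Zero K] [One K] [Neg K] (r n : ℕ) : Matrix (Fin n) (Fin n) K :=
  Matrix.of fun i j =>
    if (i : ℕ) % 2 = 0 ∧ (j : ℕ) = (i : ℕ) + 1 ∧ (j : ℕ) < r then 1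
    else if (j : ℕ) % 2 = 0 ∧ (i : ℕ) = (j : ℕ) + 1 ∧ (i : ℕ) < r then -1
    else 0

section Aux

open Module

universe u

variable {K : Type*} [Field K]


lemma Rmat_transpose_mul_self {r n : ℕ} (hr : Even r) (hrn : r ≤ n) :
    (Rmat K r n)ᵀ * Rmat K r n
      = Matrix.diagonal (fun i : Fin n => if (i : ℕ) < r then 1 else 0) := by
  have hr2 : r % 2 = 0 := Nat.even_iff.1 hr
  ext i j
  rw [Matrix.mul_apply]
  simp only [transpose_apply]
  by_cases hi : (i : ℕ) < r
  · rcases Nat.even_or_odd (i : ℕ) with he | ho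
    · have hie : (i : ℕ) % 2 = 0 := Nat.even_iff.1 he
      have hlt : (i : ℕ) + 1 < n := by omega
      rw [Finset.sum_eq_single (⟨(i : ℕ) + 1, hlt⟩ : Fin n)]
      · simp only [Rmat, of_apply, Matrix.diagonal_apply, Fin.ext_iff, Fin.val_mk, true_and, and_true]
        split_ifs <;> first | (exfalso; omega) | ring
      · intro k _ hk
        have hkv : (k : ℕ) ≠ (i : ℕ) + 1 := by simpa [Fin.ext_iff] using hk
        have hz : Rmat K r n k i = 0 := by
          simp only [Rmat, of_apply]
          rw [if_neg (by omega), if_neg (by omega)]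
        rw [hz, zero_mul]
      · intro h; exact absurd (Finset.mem_univ _) h
    · have hio : (i : ℕ) % 2 = 1 := Nat.odd_iff.1 ho
      have hlt : (i : ℕ) - 1 < n := by omega
      rw [Finset.sum_eq_single (⟨(i : ℕ) - 1, hlt⟩ : Fin n)]
      · simp only [Rmat, of_apply, Matrix.diagonal_apply, Fin.ext_iff, Fin.val_mk, true_and, and_true]
        split_ifs <;> first | (exfalso; omega) | ring
      · intro k _ hk
        have hkv : (k : ℕ) ≠ (i : ℕ) - 1 := by simpa [Fin.ext_iff] using hk
        have hz : Rmat K r n k i = 0 := by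
          simp only [Rmat, of_apply]
          rw [if_neg (by omega), if_neg (by omega)]
        rw [hz, zero_mul]
      · intro h; exact absurd (Finset.mem_univ _) h
  · rw [Finset.sum_eq_zero, Matrix.diagonal_apply]
    · simp only [Fin.ext_iff]
      split_ifs <;> first | (exfalso; omega) | rfl
    · intro k _
      have hz : Rmat K r n k i = 0 := by
        simp only [Rmat, of_apply]
        rw [if_neg (by omega), if_neg (by omega)]
      rw [hz, zero_mul]

lemma Rmat_mul_diag {r n : ℕ} :
    Rmat K r n * Matrix.diagonal (fun i : Fin n => if (i : ℕ) < r then 1 else 0)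
      = Rmat K r n := by
  ext i j
  rw [Matrix.mul_diagonal]
  by_cases hj : (j : ℕ) < r
  · rw [if_pos hj, mul_one]
  · rw [if_neg hj, mul_zero]
    simp only [Rmat, of_apply]
    rw [if_neg (by omega), if_neg (by omega)]

lemma Rmat_rank {r n : ℕ} (hr : Even r) (hrn : r ≤ n) : (Rmat K r n).rank = r := by
  classical
  set D := Matrix.diagonal (fun i : Fin n => if (i : ℕ) < r then (1:K) else 0) with hD
  have hDrank : D.rank = r := by
    rw [hD, Matrix.rank_diagonal]
    have e : {i : Fin n // (if (i : ℕ) < r then (1:K) else 0) ≠ 0} ≃ Fin r :=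
      { toFun := fun x => ⟨(x.1 : ℕ), by
          have := x.2; by_contra h; rw [if_neg (by omega)] at this; exact this rfl⟩
        invFun := fun x => ⟨⟨(x : ℕ), lt_of_lt_of_le x.2 hrn⟩, by
          rw [if_pos x.2]; exact one_ne_zero⟩
        left_inv := fun x => by ext; rfl
        right_inv := fun x => rfl }
    rw [Fintype.card_congr e, Fintype.card_fin]
  have h₁ : D.rank ≤ (Rmat K r n).rank := by
    have := Matrix.rank_mul_le_right (Rmat K r n)ᵀ (Rmat K r n)
    rwa [Rmat_transpose_mul_self hr hrn] at this
  have h₂ : (Rmat K r n).rank ≤ D.rank := by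
    have := Matrix.rank_mul_le_right (Rmat K r n) D
    rwa [Rmat_mul_diag] at this
  omega

section entries

variable {r n : ℕ}

lemma Rmat_diag (i j : Fin n) (h : (i : ℕ) = (j : ℕ)) : Rmat K r n i j = 0 := by
  simp only [Rmat, of_apply]; rw [if_neg (by omega), if_neg (by omega)]

lemma Rmat_01 (i j : Fin n) (hi : (i : ℕ) = 0) (hj : (j : ℕ) = 1) (h1 : 1 < r) :
    Rmat K r n i j = 1 := by
  simp only [Rmat, of_apply]; rw [if_pos (by omega)]

lemma Rmat_10 (i j : Fin n) (hi : (i : ℕ) = 1) (hj : (j : ℕ) = 0) (h1 : 1 < r) :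
    Rmat K r n i j = -1 := by
  simp only [Rmat, of_apply]; rw [if_neg (by omega), if_pos (by omega)]

lemma Rmat_cross1 (i j : Fin n) (hi : (i : ℕ) < 2) (hj : 2 ≤ (j : ℕ)) :
    Rmat K r n i j = 0 := by
  simp only [Rmat, of_apply]; rw [if_neg (by omega), if_neg (by omega)]

lemma Rmat_cross2 (i j : Fin n) (hi : 2 ≤ (i : ℕ)) (hj : (j : ℕ) < 2) :
    Rmat K r n i j = 0 := by
  simp only [Rmat, of_apply]; rw [if_neg (by omega), if_neg (by omega)]

lemma Rmat_shift {m : ℕ} (i j : Fin n) (k l : Fin m) (hi : (i : ℕ) = 2 + (k : ℕ))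
    (hj : (j : ℕ) = 2 + (l : ℕ)) : Rmat K (2 + r) n i j = Rmat K r m k l := by
  simp only [Rmat, of_apply]; rw [hi, hj]
  exact if_congr (by omega) rfl (if_congr (by omega) rfl rfl)

end entries

open LinearMap (BilinForm)
open LinearMap.BilinForm

lemma key_induction (n : ℕ) :
    ∀ {V : Type u} [AddCommGroup V] [Module K V] [FiniteDimensional K V]
      (B : BilinForm K V), finrank K V = n → B.IsAlt →
      ∃ r, Even r ∧ r ≤ n ∧ ∃ b : Basis (Fin n) K V,
        ∀ i j, B (b i) (b j) = Rmat K r n i j := by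
  induction n using Nat.strong_induction_on with
  | _ n ih =>
    intro V _ _ _ B hdim halt
    by_cases hB : B = 0
    · refine ⟨0, Even.zero, Nat.zero_le _, Module.finBasisOfFinrankEq K V hdim, fun i j => ?_⟩
      simp [hB, Rmat]
    · obtain ⟨u, v, huv⟩ : ∃ u v, B u v ≠ 0 := by
        by_contra h
        push_neg at h
        exact hB (by ext u v; simp [h])
      obtain ⟨e₁, e₂, h12⟩ : ∃ a b, B a b = 1 :=
        ⟨u, (B u v)⁻¹ • v, by rw [_root_.map_smul, smul_eq_mul, inv_mul_cancel₀ huv]⟩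
      have h21 : B e₂ e₁ = -1 := by rw [← halt.neg_eq e₁ e₂, h12]
      have h11 : B e₁ e₁ = 0 := halt e₁
      have h22 : B e₂ e₂ = 0 := halt e₂
      have hind : LinearIndependent K ![e₁, e₂] := by
        rw [LinearIndependent.pair_iff]
        intro s t hst
        have hs : s = 0 := by
          have h' := congrArg (fun w => B w e₂) hst
          simpa [map_add, _root_.map_smul, h12, h22] using h'
        have ht : t = 0 := by
          have h' := congrArg (fun w => B w e₁) hst
          simpa [map_add, _root_.map_smul, h21, h11, hs] using h'
        exact ⟨hs, ht⟩
      set W := Submodule.span K (Set.range ![e₁, e₂]) with hWdef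
      have hset : Set.range ![e₁, e₂] = {e₁, e₂} := by
        ext x; simp only [Set.mem_range, Fin.exists_fin_two, Matrix.cons_val_zero,
          Matrix.cons_val_one, Matrix.head_cons, Set.mem_insert_iff, Set.mem_singleton_iff]
        tauto
      have he₁W : e₁ ∈ W := Submodule.subset_span ⟨0, rfl⟩
      have he₂W : e₂ ∈ W := Submodule.subset_span ⟨1, rfl⟩
      let bW : Basis (Fin 2) K W := Basis.span hind
      have hbW : ∀ k : Fin 2, (bW k : V) = ![e₁, e₂] k := fun k => congrArg Subtype.val (Basis.span_apply hind k)
      have hWdim : finrank K W = 2 := by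
        rw [hWdef, finrank_span_eq_card hind, Fintype.card_fin]
      have hrestr : (B.restrict W).Nondegenerate := by
        refine LinearMap.BilinForm.Nondegenerate.ofSeparatingLeft ?_
        intro x hx
        have hx1 : B (x : V) e₁ = 0 := hx ⟨e₁, he₁W⟩
        have hx2 : B (x : V) e₂ = 0 := hx ⟨e₂, he₂W⟩
        obtain ⟨s, t, hst⟩ := Submodule.mem_span_pair.1
          (show (x : V) ∈ Submodule.span K {e₁, e₂} by rw [← hset]; exact x.2)
        have hs : s = 0 := by
          rw [← hst, map_add, LinearMap.add_apply, _root_.map_smul, _root_.map_smul,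
            LinearMap.smul_apply, LinearMap.smul_apply, h12, h22] at hx2
          simpa using hx2
        have ht : t = 0 := by
          rw [← hst, map_add, LinearMap.add_apply, _root_.map_smul, _root_.map_smul,
            LinearMap.smul_apply, LinearMap.smul_apply, h11, h21] at hx1
          simpa [hs] using hx1
        have hx0 : (x : V) = 0 := by rw [← hst, hs, ht, zero_smul, zero_smul, add_zero]
        exact Subtype.ext hx0
      have hcompl : IsCompl W (B.orthogonal W) :=
        isCompl_orthogonal_of_restrict_nondegenerate halt.isRefl hrestr
      set W' := B.orthogonal W with hW'def
      have hsum : finrank K W + finrank K W' = n := by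
        rw [← hdim]; exact Submodule.finrank_add_eq_of_isCompl hcompl
      have hn2 : 2 ≤ n := by omega
      have hW'dim : finrank K (W' : Submodule K V) = n - 2 := by omega
      obtain ⟨r', hr'even, hr'le, bc, hbc⟩ :=
        ih (n - 2) (by omega) (B.restrict W') hW'dim (fun x => halt x)
      set f := Submodule.prodEquivOfIsCompl W W' hcompl with hfdef
      set eqv : (Fin 2 ⊕ Fin (n - 2)) ≃ Fin n :=
        finSumFinEquiv.trans (finCongr (by omega)) with heqv
      set bAll : Basis (Fin 2 ⊕ Fin (n - 2)) K V := (bW.prod bc).map f with hbAlldef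
      have hbAll_l : ∀ k : Fin 2, bAll (Sum.inl k) = ![e₁, e₂] k := by
        intro k
        rw [hbAlldef, Basis.map_apply, Basis.prod_apply]
        simp [hfdef, Submodule.coe_prodEquivOfIsCompl', hbW]
      have hbAll_r : ∀ k, bAll (Sum.inr k) = (bc k : V) := by
        intro k
        rw [hbAlldef, Basis.map_apply, Basis.prod_apply]
        simp [hfdef, Submodule.coe_prodEquivOfIsCompl']
      have hval_l : ∀ k : Fin 2, ((eqv (Sum.inl k)) : ℕ) = (k : ℕ) := by
        intro k; simp [heqv]
      have hval_r : ∀ k : Fin (n - 2), ((eqv (Sum.inr k)) : ℕ) = 2 + (k : ℕ) := by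
        intro k; simp [heqv]
      have horth : ∀ (k : Fin 2) (l : Fin (n - 2)), B (![e₁, e₂] k) (bc l : V) = 0 := by
        intro k l
        exact (bc l).2 _ (Submodule.subset_span ⟨k, rfl⟩)
      refine ⟨2 + r', (even_two).add hr'even, by omega, bAll.reindex eqv, fun i j => ?_⟩
      rw [Basis.reindex_apply, Basis.reindex_apply]
      obtain ⟨p, rfl⟩ : ∃ p, eqv p = i := ⟨eqv.symm i, eqv.apply_symm_apply i⟩
      obtain ⟨q, rfl⟩ : ∃ q, eqv q = j := ⟨eqv.symm j, eqv.apply_symm_apply j⟩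
      rw [Equiv.symm_apply_apply, Equiv.symm_apply_apply]
      rcases p with k | k <;> rcases q with l | l
      · rw [hbAll_l, hbAll_l]
        rcases (by omega : (k : ℕ) = 0 ∨ (k : ℕ) = 1) with hk | hk <;>
          rcases (by omega : (l : ℕ) = 0 ∨ (l : ℕ) = 1) with hl | hl
        · rw [Rmat_diag _ _ (by rw [hval_l, hval_l, hk, hl])]
          have hk' : k = 0 := Fin.ext hk
          have hl' : l = 0 := Fin.ext hl
          subst hk'; subst hl'
          simpa using h11
        · rw [Rmat_01 _ _ (by rw [hval_l, hk]) (by rw [hval_l, hl]) (by omega)]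
          have hk' : k = 0 := Fin.ext hk
          have hl' : l = 1 := Fin.ext hl
          subst hk'; subst hl'
          simpa using h12
        · rw [Rmat_10 _ _ (by rw [hval_l, hk]) (by rw [hval_l, hl]) (by omega)]
          have hk' : k = 1 := Fin.ext hk
          have hl' : l = 0 := Fin.ext hl
          subst hk'; subst hl'
          simpa using h21
        · rw [Rmat_diag _ _ (by rw [hval_l, hval_l, hk, hl])]
          have hk' : k = 1 := Fin.ext hk
          have hl' : l = 1 := Fin.ext hl
          subst hk'; subst hl'
          simpa using h22
      · rw [hbAll_l, hbAll_r, horth,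
          Rmat_cross1 _ _ (by rw [hval_l]; exact k.isLt) (by rw [hval_r]; omega)]
      · rw [hbAll_r, hbAll_l, halt.isRefl _ _ (horth l k),
          Rmat_cross2 _ _ (by rw [hval_r]; omega) (by rw [hval_l]; exact l.isLt)]
      · rw [hbAll_r, hbAll_r]
        have : B (bc k : V) (bc l : V) = Rmat K r' (n - 2) k l := hbc k l
        rw [this, Rmat_shift _ _ k l (by rw [hval_r]) (by rw [hval_r])]

end Aux

/-- Over a field of characteristic `≠ 2`, an antisymmetric matrix has even rank `r`
and is congruent to `R^r_n`. -/
theorem stmt_9 {K : Type*} [Field K] (hchar : ringChar K ≠ 2) {n : ℕ}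
    (A : Matrix (Fin n) (Fin n) K) (hA : Aᵀ = -A) :
    Even A.rank ∧
      ∃ P : Matrix (Fin n) (Fin n) K, IsUnit P ∧ Pᵀ * A * P = Rmat K A.rank n := by
  classical
  have h2 : (2 : K) ≠ 0 := Ring.two_ne_zero hchar
  set B : LinearMap.BilinForm K (Fin n → K) := Matrix.toLinearMap₂' K A with hBdef
  have hB_apply : ∀ x y : Fin n → K, B x y = x ⬝ᵥ A *ᵥ y := by
    intro x y
    rw [hBdef, Matrix.toLinearMap₂'_apply]
    simp only [smul_eq_mul, dotProduct, mulVec, Finset.mul_sum]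
    refine Finset.sum_congr rfl fun i _ => Finset.sum_congr rfl fun j _ => by ring
  have halt : B.IsAlt := by
    intro x
    have hskew : B x x = -B x x := by
      calc B x x = x ⬝ᵥ A *ᵥ x := hB_apply x x
        _ = x ᵥ* A ⬝ᵥ x := dotProduct_mulVec x A x
        _ = Aᵀ *ᵥ x ⬝ᵥ x := by rw [mulVec_transpose]
        _ = (-A) *ᵥ x ⬝ᵥ x := by rw [hA]
        _ = -(A *ᵥ x ⬝ᵥ x) := by rw [neg_mulVec, neg_dotProduct]
        _ = -(x ⬝ᵥ A *ᵥ x) := by rw [dotProduct_comm]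
        _ = -B x x := by rw [hB_apply]
    have h2m : (2 : K) * B x x = 0 := by
      rw [two_mul]
      rw [eq_neg_iff_add_eq_zero] at hskew
      exact hskew
    rcases mul_eq_zero.1 h2m with h | h
    · exact absurd h h2
    · exact h
  obtain ⟨r, hreven, hrle, b, hb⟩ :=
    key_induction (K := K) n (V := Fin n → K) B (Module.finrank_fin_fun (R := K)) halt
  set P : Matrix (Fin n) (Fin n) K := (Pi.basisFun K (Fin n)).toMatrix ⇑b with hPdef
  have hPentry : ∀ i j, P i j = b j i := by
    intro i j
    rw [hPdef, Module.Basis.toMatrix_apply, Pi.basisFun_repr]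
  have hPunit : IsUnit P := by
    letI := (Pi.basisFun K (Fin n)).invertibleToMatrix b
    exact isUnit_of_invertible P
  have hcong : Pᵀ * A * P = Rmat K r n := by
    ext i j
    rw [← hb i j, hB_apply]
    simp only [Matrix.mul_apply, Matrix.transpose_apply, hPentry, dotProduct, mulVec,
      Finset.sum_mul, Finset.mul_sum]
    rw [Finset.sum_comm]
    refine Finset.sum_congr rfl fun k _ => Finset.sum_congr rfl fun l _ => by ring
  have hrank : A.rank = r := by
    have hdet : IsUnit P.det := (Matrix.isUnit_iff_isUnit_det P).1 hPunit
    have hdetT : IsUnit Pᵀ.det := by rwa [Matrix.det_transpose]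
    have h1 : (Pᵀ * A * P).rank = A.rank := by
      rw [Matrix.rank_mul_eq_left_of_isUnit_det P (Pᵀ * A) hdet,
        Matrix.rank_mul_eq_right_of_isUnit_det Pᵀ A hdetT]
    rw [hcong, Rmat_rank hreven hrle] at h1
    exact h1.symm
  exact ⟨hrank ▸ hreven, P, hPunit, by rw [hrank]; exact hcong⟩
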